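/- For every k ≥ 1 and all k×k complex matrices X, Y with Xᴴ = X, X·X = X, Yᴴ = Y, Y·Y = Y, one has Re( tr(XYXY)/k ) − Re( tr(XY)/k ) · Re( tr(Y)/k ) ≥ −1/27. -/

import Mathlib

open Matrix Finset

namespace TraceRegimeAux

variable {k : ℕ}

noncomputable section

lemma basis_coe_ne_zero {A : Matrix (Fin k) (Fin k) ℂ} (hA : A.IsHermitian) (i : Fin k) :
    (⇑(hA.eigenvectorBasis i) : Fin k → ℂ) ≠ 0 := by
  intro h
  exact hA.eigenvectorBasis.orthonormal.ne_zero i (by ext j; exact congrFun h j)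

lemma proj_eig_zero_or_one {A : Matrix (Fin k) (Fin k) ℂ} (hA : A.IsHermitian)
    (h2 : A * A = A) (i : Fin k) : hA.eigenvalues i = 0 ∨ hA.eigenvalues i = 1 := by
  set v : Fin k → ℂ := ⇑(hA.eigenvectorBasis i) with hv
  have hmv : A *ᵥ v = hA.eigenvalues i • v := hA.mulVec_eigenvectorBasis i
  have h1 : (A * A) *ᵥ v = (hA.eigenvalues i * hA.eigenvalues i) • v := by
    rw [← mulVec_mulVec, hmv, mulVec_smul, hmv, smul_smul]
  rw [h2, hmv] at h1
  have h3 : (hA.eigenvalues i * hA.eigenvalues i - hA.eigenvalues i) • v = 0 := by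
    rw [sub_smul, h1, sub_self]
  rcases smul_eq_zero.mp h3 with h | h
  · have : hA.eigenvalues i * (hA.eigenvalues i - 1) = 0 := by ring_nf; linarith [h]
    rcases mul_eq_zero.mp this with h' | h'
    · exact Or.inl h'
    · exact Or.inr (by linarith [sub_eq_zero.mp h'])
  · exact absurd h (basis_coe_ne_zero hA i)

lemma star_mul_eigU {A : Matrix (Fin k) (Fin k) ℂ} (hA : A.IsHermitian) :
    star (hA.eigenvectorUnitary : Matrix (Fin k) (Fin k) ℂ) *
      (hA.eigenvectorUnitary : Matrix (Fin k) (Fin k) ℂ) = 1 :=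
  mem_unitaryGroup_iff'.mp hA.eigenvectorUnitary.2

lemma mul_star_eigU {A : Matrix (Fin k) (Fin k) ℂ} (hA : A.IsHermitian) :
    (hA.eigenvectorUnitary : Matrix (Fin k) (Fin k) ℂ) *
      star (hA.eigenvectorUnitary : Matrix (Fin k) (Fin k) ℂ) = 1 :=
  mem_unitaryGroup_iff.mp hA.eigenvectorUnitary.2

lemma trace_eq_sum_eigs {A : Matrix (Fin k) (Fin k) ℂ} (hA : A.IsHermitian) :
    A.trace = ((∑ i, hA.eigenvalues i : ℝ) : ℂ) := by
  conv_lhs => rw [hA.spectral_theorem, Unitary.conjStarAlgAut_apply]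
  rw [trace_mul_cycle, star_mul_eigU hA, one_mul, trace_diagonal]
  push_cast
  rfl

lemma trace_sq_eq_sum_eigs {A : Matrix (Fin k) (Fin k) ℂ} (hA : A.IsHermitian) :
    (A * A).trace = ((∑ i, (hA.eigenvalues i) ^ 2 : ℝ) : ℂ) := by
  set U : Matrix (Fin k) (Fin k) ℂ := (hA.eigenvectorUnitary : Matrix (Fin k) (Fin k) ℂ)
  set D : Matrix (Fin k) (Fin k) ℂ := diagonal (RCLike.ofReal ∘ hA.eigenvalues)
  have hAA : A * A = U * (D * D) * star U := by
    conv_lhs => rw [hA.spectral_theorem, Unitary.conjStarAlgAut_apply]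
    have : U * D * star U * (U * D * star U) = U * (D * (star U * U) * D) * star U := by
      simp only [mul_assoc]
    rw [this, star_mul_eigU hA, mul_one]
  rw [hAA, trace_mul_cycle, star_mul_eigU hA, one_mul]
  have : D * D = diagonal (fun i => ((hA.eigenvalues i ^ 2 : ℝ) : ℂ)) := by
    rw [diagonal_mul_diagonal]
    congr 1; funext i; simp [Function.comp]; push_cast; ring
  rw [this, trace_diagonal]
  push_cast
  rfl

lemma rank_sub_smul_one {A : Matrix (Fin k) (Fin k) ℂ} (hA : A.IsHermitian) (c : ℝ) :
    (A - (c : ℂ) • 1).rank = (univ.filter fun i => hA.eigenvalues i ≠ c).card := by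
  classical
  set U : Matrix (Fin k) (Fin k) ℂ := (hA.eigenvectorUnitary : Matrix (Fin k) (Fin k) ℂ)
  have hdU : IsUnit U.det :=
    IsUnit.of_mul_eq_one _ (by rw [← det_mul, mul_star_eigU hA, det_one])
  have hdU' : IsUnit (star U).det :=
    IsUnit.of_mul_eq_one _ (by rw [← det_mul, star_mul_eigU hA, det_one])
  have key : A - (c : ℂ) • 1 =
      U * diagonal (fun i => ((hA.eigenvalues i - c : ℝ) : ℂ)) * star U := by
    conv_lhs => rw [hA.spectral_theorem, Unitary.conjStarAlgAut_apply]
    have h1 : (c : ℂ) • (1 : Matrix (Fin k) (Fin k) ℂ) = U * ((c : ℂ) • 1) * star U := by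
      rw [mul_smul_comm, mul_one, smul_mul_assoc, mul_star_eigU hA]
    rw [h1, ← sub_mul, ← mul_sub]
    congr 2
    rw [smul_one_eq_diagonal, diagonal_sub]
    congr 1; funext i; simp [Function.comp]
  rw [key, rank_mul_eq_left_of_isUnit_det _ _ hdU', rank_mul_eq_right_of_isUnit_det _ _ hdU,
    rank_diagonal, Fintype.card_subtype]
  congr 1
  apply Finset.filter_congr
  intro i _
  simp [sub_eq_zero]

lemma rank_eq_card_ne_zero {A : Matrix (Fin k) (Fin k) ℂ} (hA : A.IsHermitian) :
    A.rank = (univ.filter fun i => hA.eigenvalues i ≠ 0).card := by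
  have := rank_sub_smul_one hA 0
  simpa using this

lemma rank_sub_one {A : Matrix (Fin k) (Fin k) ℂ} (hA : A.IsHermitian) :
    (A - 1).rank = (univ.filter fun i => hA.eigenvalues i ≠ 1).card := by
  have := rank_sub_smul_one hA 1
  simpa using this

lemma matrix_rank_add_le (A B : Matrix (Fin k) (Fin k) ℂ) :
    (A + B).rank ≤ A.rank + B.rank := by
  rw [Matrix.rank, Matrix.rank, Matrix.rank, Matrix.mulVecLin_add]
  refine le_trans (Submodule.finrank_mono ?_) (Submodule.finrank_add_le_finrank_add_finrank _ _)
  rintro x ⟨y, rfl⟩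
  exact Submodule.add_mem_sup (LinearMap.mem_range_self _ _) (LinearMap.mem_range_self _ _)

/-- The trace of a hermitian projection is the number of eigenvalues equal to `1`. -/
lemma sum_eigs_proj {A : Matrix (Fin k) (Fin k) ℂ} (hA : A.IsHermitian) (h2 : A * A = A) :
    ∑ i, hA.eigenvalues i = ((univ.filter fun i => hA.eigenvalues i = 1).card : ℝ) := by
  rw [← Finset.sum_filter_add_sum_filter_not univ (fun i => hA.eigenvalues i = 1)]
  have h1 : ∑ i ∈ univ.filter (fun i => hA.eigenvalues i = 1), hA.eigenvalues i
      = ((univ.filter fun i => hA.eigenvalues i = 1).card : ℝ) := by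
    rw [Finset.sum_congr rfl (fun i hi => (Finset.mem_filter.mp hi).2)]
    simp
  have h0 : ∑ i ∈ univ.filter (fun i => ¬ hA.eigenvalues i = 1), hA.eigenvalues i = 0 := by
    refine Finset.sum_eq_zero fun i hi => ?_
    rcases proj_eig_zero_or_one hA h2 i with h | h
    · exact h
    · exact absurd h (Finset.mem_filter.mp hi).2
  rw [h1, h0, add_zero]

end

end TraceRegimeAux


section Main
open TraceRegimeAux

set_option maxHeartbeats 1000000 in
/-- For all `k ≥ 1` and all `k × k` complex projections `X, Y`,
`Re(tr(XYXY)/k) − Re(tr(XY)/k)·Re(tr(Y)/k) ≥ −1/27`. -/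
theorem trace_regime_lower_bound (k : ℕ) (hk : 1 ≤ k)
    (X Y : Matrix (Fin k) (Fin k) ℂ)
    (hX : Xᴴ = X) (hX2 : X * X = X) (hY : Yᴴ = Y) (hY2 : Y * Y = Y) :
    -1 / 27 ≤ ((X * Y * X * Y).trace / (k : ℂ)).re -
      ((X * Y).trace / (k : ℂ)).re * (Y.trace / (k : ℂ)).re := by
  classical
  have hXH : X.IsHermitian := hX
  have hYH : Y.IsHermitian := hY
  set B : Matrix (Fin k) (Fin k) ℂ := Y * X * Y with hBdef
  have hBH : B.IsHermitian := by
    unfold B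
    unfold Matrix.IsHermitian
    rw [conjTranspose_mul, conjTranspose_mul, hX, hY, mul_assoc]
  -- eigenvalue data
  set lam : Fin k → ℝ := hBH.eigenvalues with hlam
  set nX : ℕ := (univ.filter fun i => hXH.eigenvalues i = 1).card with hnX
  set nY : ℕ := (univ.filter fun i => hYH.eigenvalues i = 1).card with hnY
  set F0 : Finset (Fin k) := univ.filter (fun i => lam i ≠ 0) with hF0
  set F1 : Finset (Fin k) := univ.filter (fun i => lam i ≠ 1) with hF1
  -- trace identities
  have htrB : B.trace = (X * Y).trace := by
    rw [hBdef, mul_assoc, trace_mul_comm]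
    congr 1
    rw [mul_assoc, hY2]
  have hBB : B * B = Y * (X * (Y * (X * Y))) := by
    rw [hBdef]
    have hYY : ∀ Z : Matrix (Fin k) (Fin k) ℂ, Y * (Y * Z) = Y * Z := fun Z => by
      rw [← mul_assoc, hY2]
    simp only [mul_assoc, hYY]
  have htrBB : (B * B).trace = (X * Y * X * Y).trace := by
    rw [hBB, trace_mul_comm]
    congr 1
    simp only [mul_assoc, hY2]
  -- counting / rank inequalities
  have hcX0 : (univ.filter fun i => hXH.eigenvalues i ≠ 0).card = nX := by
    rw [hnX]
    congr 1
    apply Finset.filter_congr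
    intro i _
    rcases proj_eig_zero_or_one hXH hX2 i with h | h <;> simp [h]
  have hrB : B.rank ≤ nX := by
    calc B.rank ≤ (Y * X).rank := rank_mul_le_left (Y * X) Y
      _ ≤ X.rank := rank_mul_le_right Y X
      _ = nX := by rw [rank_eq_card_ne_zero hXH, hcX0]
  have hcX1 : (univ.filter fun i => hXH.eigenvalues i ≠ 1).card = k - nX := by
    rw [hnX, Finset.filter_not, Finset.card_sdiff_of_subset (Finset.filter_subset _ _), Finset.card_univ,
      Fintype.card_fin]
  have hcY1 : (univ.filter fun i => hYH.eigenvalues i ≠ 1).card = k - nY := by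
    rw [hnY, Finset.filter_not, Finset.card_sdiff_of_subset (Finset.filter_subset _ _), Finset.card_univ,
      Fintype.card_fin]
  have hrB1 : (B - 1).rank ≤ (k - nY) + (k - nX) := by
    have hdecomp : B - 1 = (Y - 1) + (Y * (X - 1) * Y) := by
      have h1 : Y * (X - 1) * Y = B - Y := by
        rw [hBdef, mul_sub, mul_one, sub_mul, hY2]
      rw [h1]
      abel
    calc (B - 1).rank ≤ (Y - 1).rank + (Y * (X - 1) * Y).rank := by
          rw [hdecomp]; exact matrix_rank_add_le _ _
      _ ≤ (Y - 1).rank + (X - 1).rank := by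
          have : (Y * (X - 1) * Y).rank ≤ (X - 1).rank :=
            le_trans (rank_mul_le_left (Y * (X - 1)) Y) (rank_mul_le_right Y (X - 1))
          omega
      _ = (k - nY) + (k - nX) := by
          rw [rank_sub_one hYH, rank_sub_one hXH, hcY1, hcX1]
  have hF0card : F0.card = B.rank := (rank_eq_card_ne_zero hBH).symm
  have hF1card : F1.card = (B - 1).rank := (rank_sub_one hBH).symm
  have hUnion : F0 ∪ F1 = univ := by
    ext i
    simp only [Finset.mem_union, hF0, hF1, Finset.mem_filter, Finset.mem_univ, true_and,
      iff_true]
    by_cases h : lam i = 0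
    · right; rw [h]; norm_num
    · left; exact h
  have hcardsum : F0.card + F1.card = k + (F0 ∩ F1).card := by
    rw [← Finset.card_union_add_card_inter, hUnion, Finset.card_univ, Fintype.card_fin]
  have hnXk : nX ≤ k := by
    rw [hnX]; exact le_trans (Finset.card_filter_le _ _) (by simp)
  have hnYk : nY ≤ k := by
    rw [hnY]; exact le_trans (Finset.card_filter_le _ _) (by simp)
  have hg : (F0 ∩ F1).card + nY ≤ k := by omega
  -- the analytic estimate
  have hk0 : (0 : ℝ) < k := by exact_mod_cast hk
  set T : ℝ := (nY : ℝ) / k with hT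
  have hT0 : 0 ≤ T := by positivity
  have hT1 : T ≤ 1 := by
    rw [hT, div_le_one hk0]; exact_mod_cast hnYk
  set S1 : ℝ := ∑ i, lam i with hS1
  set S2 : ℝ := ∑ i, (lam i) ^ 2 with hS2
  have hsum : -(((F0 ∩ F1).card : ℝ)) * (T ^ 2 / 4) ≤ S2 - T * S1 := by
    have heq : S2 - T * S1 = ∑ i, ((lam i) ^ 2 - T * lam i) := by
      rw [hS1, hS2, Finset.sum_sub_distrib, Finset.mul_sum]
    have hite : ∑ i, (if i ∈ F0 ∩ F1 then -(T ^ 2 / 4) else (0 : ℝ))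
        = -(((F0 ∩ F1).card : ℝ)) * (T ^ 2 / 4) := by
      rw [Finset.sum_ite_mem, Finset.univ_inter, Finset.sum_const, nsmul_eq_mul]
      ring
    rw [heq, ← hite]
    refine Finset.sum_le_sum fun i _ => ?_
    by_cases hmem : i ∈ F0 ∩ F1
    · simp only [hmem, if_true]
      nlinarith [sq_nonneg (lam i - T / 2)]
    · simp only [hmem, if_false]
      have : lam i = 0 ∨ lam i = 1 := by
        rw [Finset.mem_inter, hF0, hF1] at hmem
        simp only [Finset.mem_filter, Finset.mem_univ, true_and] at hmem
        tauto
      rcases this with h | h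
      · rw [h]; norm_num
      · rw [h]; nlinarith [hT1]
  have hgR : ((F0 ∩ F1).card : ℝ) ≤ (k : ℝ) - nY := by
    have h : ((F0 ∩ F1).card : ℝ) + (nY : ℝ) ≤ (k : ℝ) := by exact_mod_cast hg
    linarith
  have hkT : (k : ℝ) - nY = k * (1 - T) := by
    rw [hT]
    field_simp
  have hscalar : (1 - T) * T ^ 2 ≤ 4 / 27 := by
    nlinarith [mul_nonneg (sq_nonneg (3 * T - 2)) (by linarith : (0 : ℝ) ≤ 3 * T + 1)]
  have hmain : -(k : ℝ) / 27 ≤ S2 - T * S1 := by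
    have h1 : -(((F0 ∩ F1).card : ℝ)) * (T ^ 2 / 4) ≥ -((k : ℝ) - nY) * (T ^ 2 / 4) := by
      have hT2 : 0 ≤ T ^ 2 / 4 := by positivity
      nlinarith
    have h2 : ((k : ℝ) - nY) * (T ^ 2 / 4) ≤ (k : ℝ) / 27 := by
      rw [hkT]
      have := mul_le_mul_of_nonneg_left hscalar (le_of_lt hk0)
      nlinarith
    linarith
  -- rewrite the goal in terms of S1, S2, nY
  have htr1 : (X * Y * X * Y).trace = ((S2 : ℝ) : ℂ) := by
    rw [← htrBB, trace_sq_eq_sum_eigs hBH, hS2]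
  have htr2 : (X * Y).trace = ((S1 : ℝ) : ℂ) := by
    rw [← htrB, trace_eq_sum_eigs hBH, hS1]
  have htr3 : Y.trace = ((nY : ℝ) : ℂ) := by
    rw [trace_eq_sum_eigs hYH, sum_eigs_proj hYH hY2, hnY]
  rw [htr1, htr2, htr3]
  have hre : ∀ r : ℝ, ((r : ℂ) / (k : ℂ)).re = r / k := by
    intro r
    rw [show ((k : ℂ)) = ((k : ℝ) : ℂ) by push_cast; rfl, ← Complex.ofReal_div,
      Complex.ofReal_re]
  rw [hre, hre, hre]
  have hgoal : S2 / k - S1 / k * ((nY : ℝ) / k) = (S2 - T * S1) / k := by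
    rw [hT]; ring
  rw [hgoal]
  rw [div_le_div_iff₀ (by norm_num) hk0]
  linarith [hmain]

end Main
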